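/- With the notation of the random time change construction, the original path is recovered from Z by evaluating at the time change: Z(γ⁰(t)) = L(t) for every t ≥ 0. (This is the identity Z_{γ⁰(t)} ≡ L(t) used in Step 3 of the proof of Theorem 2.1.) -/

import Mathlib

open Filter MeasureTheory

/-- The sum of squared jumps `q(t) = Σ_{0 < s ≤ t} (ΔL s)²`, where `ΔL s = L s − L(s−)`
and `Lm` denotes the left-limit function `L(·−)`. (For `t ≤ 0` the index set is empty, so
`q(t) = 0`.) -/
noncomputable def jumpSq (L Lm : ℝ → ℝ) (t : ℝ) : ℝ :=
  ∑' s : Set.Ioc (0 : ℝ) t, (L s - Lm s) ^ 2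

/-- The strictly increasing time change `γ⁰(t) = q(t) + t`. -/
noncomputable def gamma0 (L Lm : ℝ → ℝ) (t : ℝ) : ℝ := jumpSq L Lm t + t

/-- The generalized right-continuous inverse `f⁻(u) = inf{s > 0 : f s > u}`. -/
noncomputable def geninv (f : ℝ → ℝ) (u : ℝ) : ℝ := sInf {s : ℝ | 0 < s ∧ u < f s}

/-- `ζ⁰`, the generalized inverse of `γ⁰`. -/
noncomputable def zeta0 (L Lm : ℝ → ℝ) (u : ℝ) : ℝ := geninv (gamma0 L Lm) u

/-- `η₋(t) = sup{s ≥ 0 : ζ⁰(s) < ζ⁰(t)}` (with `sup ∅ = 0`, the real convention). -/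
noncomputable def etaMinus (L Lm : ℝ → ℝ) (t : ℝ) : ℝ :=
  sSup {s : ℝ | 0 ≤ s ∧ zeta0 L Lm s < zeta0 L Lm t}

/-- `η⁺(t) = inf{s ≥ 0 : ζ⁰(s) > ζ⁰(t)}`. -/
noncomputable def etaPlus (L Lm : ℝ → ℝ) (t : ℝ) : ℝ :=
  sInf {s : ℝ | 0 ≤ s ∧ zeta0 L Lm t < zeta0 L Lm s}

/-- The limiting continuous path `Z`: `Z(t) = L(ζ⁰(t))` when `η₋(t) = η⁺(t)`, and the
linear interpolation between `L(ζ⁰(t)−)` and `L(ζ⁰(t))` otherwise. -/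
noncomputable def Zlim (L Lm : ℝ → ℝ) (t : ℝ) : ℝ :=
  if etaMinus L Lm t = etaPlus L Lm t then L (zeta0 L Lm t)
  else ((t - etaMinus L Lm t) * L (zeta0 L Lm t) +
        (etaPlus L Lm t - t) * Lm (zeta0 L Lm t)) /
       (etaPlus L Lm t - etaMinus L Lm t)

section Aux

variable (L Lm : ℝ → ℝ)

lemma jumpSq_nonneg (t : ℝ) : 0 ≤ jumpSq L Lm t :=
  tsum_nonneg fun _ => sq_nonneg _

lemma jumpSq_mono (hsum : ∀ t : ℝ, Summable (fun s : Set.Ioc (0 : ℝ) t => (L s - Lm s) ^ 2))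
    {a b : ℝ} (hab : a ≤ b) : jumpSq L Lm a ≤ jumpSq L Lm b := by
  refine Summable.tsum_le_tsum_of_inj
    (fun x : Set.Ioc (0:ℝ) a => (⟨x.1, x.2.1, x.2.2.trans hab⟩ : Set.Ioc (0:ℝ) b))
    (fun x y h => by have h' := congrArg Subtype.val h; exact Subtype.ext h')
    (fun c _ => sq_nonneg _) (fun i => le_rfl) (hsum a) (hsum b)

lemma gamma0_strictMono
    (hsum : ∀ t : ℝ, Summable (fun s : Set.Ioc (0 : ℝ) t => (L s - Lm s) ^ 2)) :
    StrictMono (gamma0 L Lm) :=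
  fun a b h => add_lt_add_of_le_of_lt (jumpSq_mono L Lm hsum h.le) h

lemma gamma0_self_le (t : ℝ) : t ≤ gamma0 L Lm t :=
  le_add_of_nonneg_left (jumpSq_nonneg L Lm t)

lemma gamma0_zero : gamma0 L Lm 0 = 0 := by
  have h : Set.Ioc (0:ℝ) 0 = ∅ := Set.Ioc_self 0
  simp [gamma0, jumpSq, h]

lemma zeta0_gamma0
    (hsum : ∀ t : ℝ, Summable (fun s : Set.Ioc (0 : ℝ) t => (L s - Lm s) ^ 2))
    {t : ℝ} (ht : 0 ≤ t) : zeta0 L Lm (gamma0 L Lm t) = t := by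
  have hset : {s : ℝ | 0 < s ∧ gamma0 L Lm t < gamma0 L Lm s} = Set.Ioi t := by
    ext s
    simp only [Set.mem_setOf_eq, Set.mem_Ioi]
    constructor
    · rintro ⟨_, hg⟩
      exact (gamma0_strictMono L Lm hsum).lt_iff_lt.mp hg
    · intro h
      exact ⟨ht.trans_lt h, gamma0_strictMono L Lm hsum h⟩
  rw [zeta0, geninv, hset, csInf_Ioi]

lemma jumpSq_add
    (hsum : ∀ t : ℝ, Summable (fun s : Set.Ioc (0 : ℝ) t => (L s - Lm s) ^ 2))
    {t δ : ℝ} (ht : 0 ≤ t) (hδ : 0 ≤ δ) :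
    jumpSq L Lm (t + δ) = jumpSq L Lm t + ∑' s : Set.Ioc t (t + δ), (L s - Lm s) ^ 2 := by
  have h2 : Summable (fun s : Set.Ioc t (t + δ) => (L s - Lm s) ^ 2) := by
    have hinj : Function.Injective
        (fun x : Set.Ioc t (t + δ) =>
          (⟨x.1, lt_of_le_of_lt ht x.2.1, x.2.2⟩ : Set.Ioc (0:ℝ) (t + δ))) :=
      fun x y h => by have h' := congrArg Subtype.val h; exact Subtype.ext h'
    have hsm := (hsum (t + δ)).comp_injective hinj
    exact hsm
  have hu := Summable.tsum_union_disjoint (f := fun s : ℝ => (L s - Lm s) ^ 2)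
    (Set.Ioc_disjoint_Ioc_of_le (a := (0:ℝ)) (b := t) (c := t) (d := t + δ) le_rfl) (hsum t) h2
  rw [jumpSq, ← Set.Ioc_union_Ioc_eq_Ioc ht (le_add_of_nonneg_right hδ)]
  exact hu

lemma gamma0_rc
    (hsum : ∀ t : ℝ, Summable (fun s : Set.Ioc (0 : ℝ) t => (L s - Lm s) ^ 2))
    {t ε : ℝ} (ht : 0 ≤ t) (hε : 0 < ε) :
    ∃ δ > 0, gamma0 L Lm (t + δ) ≤ gamma0 L Lm t + ε := by
  classical
  obtain ⟨s0, hs0⟩ : ∃ s0 : Finset (Set.Ioc (0:ℝ) (t + 1)),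
      (∑' x : {x : Set.Ioc (0:ℝ) (t + 1) // x ∉ s0}, (L x.1 - Lm x.1) ^ 2) < ε / 2 := by
    have h := tendsto_tsum_compl_atTop_zero
      (fun x : Set.Ioc (0:ℝ) (t + 1) => (L x - Lm x) ^ 2)
    have h2 : ∀ᶠ s : Finset (Set.Ioc (0:ℝ) (t + 1)) in atTop,
        (∑' x : {x : Set.Ioc (0:ℝ) (t + 1) // x ∉ s}, (L x.1 - Lm x.1) ^ 2) ∈
          Set.Iio (ε / 2) := h (Iio_mem_nhds (half_pos hε))
    exact h2.exists
  obtain ⟨δ₀, hδ₀pos, hδ₀⟩ : ∃ δ₀ > 0, ∀ x ∈ s0, ((x:ℝ) ≤ t ∨ t + δ₀ < (x:ℝ)) := by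
    set T : Finset ℝ := (s0.image (Subtype.val : Set.Ioc (0:ℝ) (t + 1) → ℝ)).filter (fun r => t < r) with hT
    by_cases hne : T.Nonempty
    · set d := T.inf' hne (fun r => r - t) with hd
      have hdpos : 0 < d := by
        rw [hd, Finset.lt_inf'_iff]
        intro b hb
        exact sub_pos.mpr (Finset.mem_filter.mp hb).2
      refine ⟨d / 2, half_pos hdpos, ?_⟩
      intro x hx
      by_cases hxt : t < (x:ℝ)
      · right
        have hmem : (x:ℝ) ∈ T :=
          Finset.mem_filter.mpr ⟨Finset.mem_image_of_mem Subtype.val hx, hxt⟩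
        have h1 : d ≤ (x:ℝ) - t := Finset.inf'_le _ hmem
        linarith [half_lt_self hdpos]
      · exact Or.inl (le_of_not_gt hxt)
    · refine ⟨1, one_pos, fun x hx => Or.inl (le_of_not_gt fun hxt => hne ?_)⟩
      exact ⟨(x:ℝ), Finset.mem_filter.mpr ⟨Finset.mem_image_of_mem Subtype.val hx, hxt⟩⟩
  set δ := min δ₀ (min 1 (ε / 2)) with hδdef
  have hδpos : 0 < δ := lt_min hδ₀pos (lt_min one_pos (half_pos hε))
  have hδ1 : δ ≤ 1 := (min_le_right _ _).trans (min_le_left _ _)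
  have hδε : δ ≤ ε / 2 := (min_le_right _ _).trans (min_le_right _ _)
  have hδ₀' : δ ≤ δ₀ := min_le_left _ _
  have key : (∑' s : Set.Ioc t (t + δ), (L s - Lm s) ^ 2) ≤ ε / 2 := by
    have hmemb : ∀ x : Set.Ioc t (t + δ), (x : ℝ) ∈ Set.Ioc (0:ℝ) (t + 1) :=
      fun x => ⟨lt_of_le_of_lt ht x.2.1, x.2.2.trans (by linarith)⟩
    have hnot : ∀ x : Set.Ioc t (t + δ), (⟨x.1, hmemb x⟩ : Set.Ioc (0:ℝ) (t + 1)) ∉ s0 := by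
      intro x hmem
      rcases hδ₀ _ hmem with h | h
      · exact absurd x.2.1 (not_lt.mpr h)
      · have : (x:ℝ) ≤ t + δ₀ := x.2.2.trans (by linarith)
        exact absurd h (not_lt.mpr this)
    have hle : (∑' s : Set.Ioc t (t + δ), (L s - Lm s) ^ 2) ≤
        ∑' x : {x : Set.Ioc (0:ℝ) (t + 1) // x ∉ s0}, (L x.1 - Lm x.1) ^ 2 := by
      refine Summable.tsum_le_tsum_of_inj
        (fun x : Set.Ioc t (t + δ) =>
          (⟨⟨x.1, hmemb x⟩, hnot x⟩ : {x : Set.Ioc (0:ℝ) (t + 1) // x ∉ s0}))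
        (fun x y h => by have h1 := congrArg Subtype.val h; have h2 := congrArg Subtype.val h1; exact Subtype.ext h2)
        (fun c _ => sq_nonneg _) (fun i => le_rfl) ?_ ?_
      · have hinj : Function.Injective
            (fun x : Set.Ioc t (t + δ) =>
              (⟨x.1, lt_of_le_of_lt ht x.2.1, x.2.2⟩ : Set.Ioc (0:ℝ) (t + δ))) :=
          fun x y h => by have h' := congrArg Subtype.val h; exact Subtype.ext h'
        have hsm := (hsum (t + δ)).comp_injective hinj
        exact hsm
      · have hsm := (hsum (t + 1)).comp_injective (Subtype.val_injective
          (α := Set.Ioc (0:ℝ) (t + 1)) (p := fun x => x ∉ s0))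
        exact hsm
    exact hle.trans hs0.le
  refine ⟨δ, hδpos, ?_⟩
  rw [gamma0, gamma0, jumpSq_add L Lm hsum ht hδpos.le]
  linarith

lemma zeta0_gt
    (hsum : ∀ t : ℝ, Summable (fun s : Set.Ioc (0 : ℝ) t => (L s - Lm s) ^ 2))
    {t s : ℝ} (ht : 0 ≤ t) (hs : gamma0 L Lm t < s) : t < zeta0 L Lm s := by
  obtain ⟨δ, hδpos, hδ⟩ := gamma0_rc L Lm hsum ht (show 0 < s - gamma0 L Lm t by linarith)
  have hb : ∀ r ∈ {r : ℝ | 0 < r ∧ s < gamma0 L Lm r}, t + δ ≤ r := by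
    intro r hr
    by_contra hlt
    push_neg at hlt
    have h1 : gamma0 L Lm r ≤ gamma0 L Lm (t + δ) :=
      (gamma0_strictMono L Lm hsum).monotone hlt.le
    have h2 : gamma0 L Lm r ≤ s := h1.trans (by linarith)
    exact absurd hr.2 (not_lt.mpr h2)
  have hne : {r : ℝ | 0 < r ∧ s < gamma0 L Lm r}.Nonempty := by
    refine ⟨max s 0 + 1, ?_, ?_⟩
    · have := le_max_right s 0
      linarith
    · have h1 := gamma0_self_le L Lm (max s 0 + 1)
      have h2 : s ≤ max s 0 := le_max_left s 0
      linarith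
  have : t + δ ≤ zeta0 L Lm s := le_csInf hne hb
  linarith

lemma etaPlus_gamma0
    (hsum : ∀ t : ℝ, Summable (fun s : Set.Ioc (0 : ℝ) t => (L s - Lm s) ^ 2))
    {t : ℝ} (ht : 0 ≤ t) : etaPlus L Lm (gamma0 L Lm t) = gamma0 L Lm t := by
  have hzg := zeta0_gamma0 L Lm hsum ht
  have hγt : 0 ≤ gamma0 L Lm t := ht.trans (gamma0_self_le L Lm t)
  have hsub : Set.Ioi (gamma0 L Lm t) ⊆
      {s : ℝ | 0 ≤ s ∧ zeta0 L Lm (gamma0 L Lm t) < zeta0 L Lm s} := by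
    intro s hs
    rw [Set.mem_Ioi] at hs
    exact ⟨hγt.trans hs.le, by rw [hzg]; exact zeta0_gt L Lm hsum ht hs⟩
  have hub : ∀ s ∈ {s : ℝ | 0 ≤ s ∧ zeta0 L Lm (gamma0 L Lm t) < zeta0 L Lm s},
      gamma0 L Lm t ≤ s := by
    intro s hs
    by_contra hlt
    push_neg at hlt
    rw [hzg] at hs
    rcases eq_or_lt_of_le ht with h0 | h0
    · rw [← h0, gamma0_zero] at hlt
      exact absurd hs.1 (not_le.mpr hlt)
    · have hz : zeta0 L Lm s ≤ t :=
        csInf_le ⟨0, fun r hr => hr.1.le⟩ ⟨h0, hlt⟩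
      exact absurd hs.2 (not_lt.mpr hz)
  apply le_antisymm
  · have h1 : sInf {s : ℝ | 0 ≤ s ∧ zeta0 L Lm (gamma0 L Lm t) < zeta0 L Lm s} ≤
        sInf (Set.Ioi (gamma0 L Lm t)) :=
      csInf_le_csInf ⟨gamma0 L Lm t, hub⟩ Set.nonempty_Ioi hsub
    rw [csInf_Ioi] at h1
    exact h1
  · exact le_csInf ⟨gamma0 L Lm t + 1, hsub (Set.mem_Ioi.mpr (lt_add_one _))⟩ hub

lemma etaMinus_le_gamma0
    (hsum : ∀ t : ℝ, Summable (fun s : Set.Ioc (0 : ℝ) t => (L s - Lm s) ^ 2))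
    {t : ℝ} (ht : 0 ≤ t) : etaMinus L Lm (gamma0 L Lm t) ≤ gamma0 L Lm t := by
  have hzg := zeta0_gamma0 L Lm hsum ht
  have hγt : 0 ≤ gamma0 L Lm t := ht.trans (gamma0_self_le L Lm t)
  refine Real.sSup_le ?_ hγt
  intro s hs
  by_contra hlt
  push_neg at hlt
  have hgt : zeta0 L Lm (gamma0 L Lm t) < zeta0 L Lm s := by
    rw [hzg]
    exact zeta0_gt L Lm hsum ht hlt
  exact absurd hs.2 (not_lt.mpr hgt.le)

end Aux

/-- Step 3 of the proof of Theorem 2.1: the original path is recovered from `Z` by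
evaluating at the time change, `Z(γ⁰(t)) = L(t)` for every `t ≥ 0`. -/
theorem Zlim_comp_gamma0
    (L Lm : ℝ → ℝ)
    (hrc : ∀ t : ℝ, ContinuousWithinAt L (Set.Ici t) t)
    (hleft : ∀ t : ℝ, Tendsto L (nhdsWithin t (Set.Iio t)) (nhds (Lm t)))
    (hconst : ∀ s : ℝ, s ≤ 0 → L s = L 0)
    (hsum : ∀ t : ℝ, Summable (fun s : Set.Ioc (0 : ℝ) t => (L s - Lm s) ^ 2)) :
    ∀ t : ℝ, 0 ≤ t → Zlim L Lm (gamma0 L Lm t) = L t := by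
  intro t ht
  have hzg := zeta0_gamma0 L Lm hsum ht
  have hp := etaPlus_gamma0 L Lm hsum ht
  rw [Zlim]
  by_cases h : etaMinus L Lm (gamma0 L Lm t) = etaPlus L Lm (gamma0 L Lm t)
  · rw [if_pos h, hzg]
  · rw [if_neg h, hzg, hp]
    have hm : etaMinus L Lm (gamma0 L Lm t) < gamma0 L Lm t :=
      lt_of_le_of_ne (etaMinus_le_gamma0 L Lm hsum ht) (by rw [hp] at h; exact h)
    have hne : gamma0 L Lm t - etaMinus L Lm (gamma0 L Lm t) ≠ 0 :=
      sub_ne_zero.mpr hm.ne'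
    rw [sub_self, zero_mul, add_zero, mul_div_cancel_left₀ _ hne]
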